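/- Let (x_i)_{i=0}^{k} be nonnegative reals with x_0 ≤ OPT, and suppose x_{i−1} − x_i ≥ (1/k)·x_{i−1} − (ε/k)·OPT for each i ∈ {1,…,k}. Then x_k ≤ (1/e)·OPT + (1 − 1/e)·ε·OPT, and consequently OPT − x_k ≥ (1 − 1/e)·(1 − ε)·OPT ≥ (1 − 1/e − ε)·OPT. -/

import Mathlib

/-- Inductive arithmetic core of the greedy approximation analysis: if `x₀ ≤ OPT` and
`x_{i-1} - x i ≥ (1/k)·x_{i-1} - (ε/k)·OPT` for `i = 1, …, k`, then
`x_k ≤ (1/e)·OPT + (1 - 1/e)·ε·OPT`, and consequently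
`OPT - x_k ≥ (1 - 1/e)·(1 - ε)·OPT ≥ (1 - 1/e - ε)·OPT`. -/
theorem greedy_recurrence_bound
    (k : ℕ) (hk : 1 ≤ k) (ε OPT : ℝ) (hε0 : 0 ≤ ε) (hε1 : ε ≤ 1) (hOPT : 0 < OPT)
    (x : ℕ → ℝ) (hxnonneg : ∀ i, i ≤ k → 0 ≤ x i) (hx0 : x 0 ≤ OPT)
    (hrec : ∀ i, 1 ≤ i → i ≤ k →
      (1 / (k:ℝ)) * x (i - 1) - (ε / (k:ℝ)) * OPT ≤ x (i - 1) - x i) :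
    x k ≤ (1 / Real.exp 1) * OPT + (1 - 1 / Real.exp 1) * ε * OPT ∧
    (1 - 1 / Real.exp 1) * (1 - ε) * OPT ≤ OPT - x k ∧
    (1 - 1 / Real.exp 1 - ε) * OPT ≤ OPT - x k := by
  have hkpos : (0:ℝ) < (k:ℝ) := by exact_mod_cast hk
  have hq0 : (0:ℝ) ≤ 1 - 1/(k:ℝ) := by
    have : 1/(k:ℝ) ≤ 1 := by
      rw [div_le_one hkpos]; exact_mod_cast hk
    linarith
  -- main induction
  have key : ∀ i, i ≤ k →
      x i ≤ (1 - 1/(k:ℝ))^i * OPT + (1 - (1 - 1/(k:ℝ))^i) * ε * OPT := by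
    intro i
    induction i with
    | zero => intro _; simp; nlinarith
    | succ n ih =>
      intro hnk
      have hn : n ≤ k := Nat.le_of_succ_le hnk
      have hxn := ih hn
      have hr := hrec (n+1) (Nat.le_add_left 1 n) hnk
      simp only [Nat.add_sub_cancel] at hr
      have hstep : x (n+1) ≤ (1 - 1/(k:ℝ)) * x n + (ε/(k:ℝ)) * OPT := by linarith
      have hq : (0:ℝ) ≤ (1 - 1/(k:ℝ))^n := pow_nonneg hq0 n
      calc x (n+1) ≤ (1 - 1/(k:ℝ)) * x n + (ε/(k:ℝ)) * OPT := hstep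
        _ ≤ (1 - 1/(k:ℝ)) * ((1 - 1/(k:ℝ))^n * OPT + (1 - (1 - 1/(k:ℝ))^n) * ε * OPT)
            + (ε/(k:ℝ)) * OPT := by nlinarith
        _ = (1 - 1/(k:ℝ))^(n+1) * OPT + (1 - (1 - 1/(k:ℝ))^(n+1)) * ε * OPT := by
            ring
  have hxk := key k le_rfl
  -- (1 - 1/k)^k ≤ exp(-1) = 1/e
  have hbe : (1 - 1/(k:ℝ))^k ≤ 1 / Real.exp 1 := by
    have h1 : 1 - 1/(k:ℝ) ≤ Real.exp (-(1/(k:ℝ))) := by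
      have := Real.add_one_le_exp (-(1/(k:ℝ)))
      linarith
    have h2 : (1 - 1/(k:ℝ))^k ≤ (Real.exp (-(1/(k:ℝ))))^k :=
      pow_le_pow_left₀ hq0 h1 k
    have h3 : (Real.exp (-(1/(k:ℝ))))^k = Real.exp (-(1/(k:ℝ)) * k) := by
      rw [← Real.exp_nat_mul]; ring_nf
    have h4 : -(1/(k:ℝ)) * k = -1 := by field_simp
    rw [h3, h4, Real.exp_neg] at h2
    simpa [one_div] using h2
  have heps : ε * OPT ≤ OPT := by nlinarith
  have hmain : x k ≤ (1 / Real.exp 1) * OPT + (1 - 1 / Real.exp 1) * ε * OPT := by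
    have : (1 - 1/(k:ℝ))^k * OPT + (1 - (1 - 1/(k:ℝ))^k) * ε * OPT
        ≤ (1 / Real.exp 1) * OPT + (1 - 1 / Real.exp 1) * ε * OPT := by nlinarith
    linarith
  have he1 : (0:ℝ) < 1 / Real.exp 1 := by positivity
  have he2 : 1 / Real.exp 1 ≤ 1 := by
    rw [div_le_one (Real.exp_pos 1)]
    linarith [Real.add_one_le_exp (1:ℝ)]
  have hA : (1 - 1 / Real.exp 1) * (1 - ε) * OPT ≤ OPT - x k := by nlinarith
  refine ⟨hmain, hA, ?_⟩
  nlinarith [mul_nonneg (mul_nonneg he1.le hε0) hOPT.le]
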